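/- Let M be a monoid and A a cyclic M-act. Then A is finitely presented if and only if A is isomorphic to the quotient of the M-act M by a finitely generated right congruence on M. -/
import Mathlib


/-- A right act of a monoid `M` on a type `A`. -/
structure RActOn (M : Type*) [Monoid M] (A : Type*) where
  act : A → M → A
  act_one : ∀ a, act a 1 = a
  act_mul : ∀ a m n, act a (m * n) = act (act a m) n

namespace RActOn

variable {M : Type*} [Monoid M]

/-- `f` is a homomorphism of `M`-acts. -/
def IsHom {A B : Type*} (α : RActOn M A) (β : RActOn M B) (f : A → B) : Prop :=
  ∀ a m, f (α.act a m) = β.act (f a) m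

/-- The two acts are isomorphic. -/
def Isomorphic {A B : Type*} (α : RActOn M A) (β : RActOn M B) : Prop :=
  ∃ f : A → B, IsHom α β f ∧ Function.Bijective f

/-- `ρ` is an `M`-act congruence on `A`. -/
def IsCong {A : Type*} (α : RActOn M A) (ρ : A → A → Prop) : Prop :=
  Equivalence ρ ∧ ∀ a b m, ρ a b → ρ (α.act a m) (α.act b m)

/-- The smallest congruence containing the relation `X`. -/
def congClosure {A : Type*} (α : RActOn M A) (X : A → A → Prop) : A → A → Prop :=
  fun a b => ∀ ρ : A → A → Prop, IsCong α ρ → (∀ x y, X x y → ρ x y) → ρ a b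

/-- The free `M`-act on a set `X`: carrier `X × M`, action `(x, m) · n = (x, m * n)`. -/
def free (M : Type*) [Monoid M] (X : Type*) : RActOn M (X × M) where
  act p n := (p.1, p.2 * n)
  act_one := by intro a; simp
  act_mul := by intro a m n; simp [mul_assoc]

/-- The `M`-act `α` is defined by the presentation `⟨X | R⟩`. -/
def DefinedBy {A : Type*} (α : RActOn M A) (X : Type*)
    (R : Set ((X × M) × (X × M))) : Prop :=
  ∃ f : X × M → A, Function.Surjective f ∧ IsHom (free M X) α f ∧
    ∀ u v : X × M, f u = f v ↔ congClosure (free M X) (fun a b => (a, b) ∈ R) u v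

/-- The `M`-act `α` is finitely presented. -/
def FinitelyPresented {A : Type*} (α : RActOn M A) : Prop :=
  ∃ (X : Type) (_ : Finite X) (R : Set ((X × M) × (X × M))),
    R.Finite ∧ DefinedBy α X R

/-- The `M`-act `α` is finitely generated. -/
def FinitelyGenerated {A : Type*} (α : RActOn M A) : Prop :=
  ∃ U : Set A, U.Finite ∧ ∀ a : A, ∃ u ∈ U, ∃ m : M, α.act u m = a

/-- `B` is a subact of `A`. -/
def IsSubact {A : Type*} (α : RActOn M A) (B : Set A) : Prop :=
  ∀ b ∈ B, ∀ m : M, α.act b m ∈ B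

/-- The subset `S` is generated, as a subact, by `U ⊆ S`. -/
def FGSet {A : Type*} (α : RActOn M A) (S : Set A) : Prop :=
  ∃ U ⊆ S, U.Finite ∧ ∀ a ∈ S, ∃ u ∈ U, ∃ m : M, α.act u m = a

/-- The act induced on a subact. -/
def subAct {A : Type*} (α : RActOn M A) (B : Set A) (hB : IsSubact α B) :
    RActOn M B where
  act b m := ⟨α.act b m, hB b b.2 m⟩
  act_one := by intro a; ext; simp [α.act_one]
  act_mul := by intro a m n; ext; simp [α.act_mul]

/-- The Rees congruence relation determined by `B`. -/
def reesRel {A : Type*} (B : Set A) : A → A → Prop :=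
  fun a b => a = b ∨ (a ∈ B ∧ b ∈ B)

/-- The Rees quotient act `A / B`. -/
def reesAct {A : Type*} (α : RActOn M A) (B : Set A) (hB : IsSubact α B) :
    RActOn M (Quot (reesRel B)) where
  act q m := Quot.lift (fun a => Quot.mk _ (α.act a m))
    (by
      intro a b h
      apply Quot.sound
      rcases h with h | ⟨ha, hb⟩
      · exact Or.inl (by rw [h])
      · exact Or.inr ⟨hB a ha m, hB b hb m⟩) q
  act_one := by
    intro q
    induction q using Quot.ind with
    | _ a => simp [α.act_one]
  act_mul := by
    intro q m n
    induction q using Quot.ind with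
    | _ a => simp [α.act_mul]

/-- The trivial one-element `M`-act. -/
def trivAct (M : Type*) [Monoid M] : RActOn M PUnit where
  act _ _ := PUnit.unit
  act_one := by intro a; rfl
  act_mul := by intro a m n; rfl

/-- The disjoint union of two `M`-acts. -/
def sumAct {A B : Type*} (α : RActOn M A) (β : RActOn M B) : RActOn M (A ⊕ B) where
  act x m := Sum.elim (fun a => Sum.inl (α.act a m)) (fun b => Sum.inr (β.act b m)) x
  act_one := by intro x; cases x <;> simp [α.act_one, β.act_one]
  act_mul := by intro x m n; cases x <;> simp [α.act_mul, β.act_mul]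

/-- The `M`-act `M` itself, by right multiplication. -/
def selfAct (M : Type*) [Monoid M] : RActOn M M where
  act a m := a * m
  act_one := by intro a; simp
  act_mul := by intro a m n; simp [mul_assoc]

end RActOn

open RActOn

section Aux

variable {M : Type*} [Monoid M]

/-- Pulling back a congruence along a hom and applying it to a closure. -/
lemma closure_map {A B : Type*} (α : RActOn M A) (β : RActOn M B)
    (φ : A → B) (hφ : IsHom α β φ) (X : A → A → Prop) (ρ : B → B → Prop)
    (hρ : IsCong β ρ) (hX : ∀ x y, X x y → ρ (φ x) (φ y)) :
    ∀ a b, congClosure α X a b → ρ (φ a) (φ b) := by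
  intro a b h
  exact h (fun a b => ρ (φ a) (φ b))
    ⟨⟨fun a => hρ.1.refl _, fun h => hρ.1.symm h, fun h1 h2 => hρ.1.trans h1 h2⟩,
     fun a b m hab => by show ρ (φ (α.act a m)) (φ (α.act b m)); rw [hφ, hφ]; exact hρ.2 _ _ m hab⟩ hX

/-- The kernel of a hom is a congruence. -/
lemma ker_isCong {A B : Type*} (α : RActOn M A) (β : RActOn M B)
    (f : A → B) (hf : IsHom α β f) : IsCong α (fun a b => f a = f b) := by
  refine ⟨⟨fun a => rfl, fun h => h.symm, fun h1 h2 => h1.trans h2⟩, ?_⟩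
  intro a b m hab
  rw [hf, hf, hab]

lemma closure_self {A : Type*} (α : RActOn M A) (X : A → A → Prop)
    {a b : A} (h : X a b) : congClosure α X a b :=
  fun _ _ hX => hX a b h

end Aux

open RActOn in
/-- A cyclic `M`-act is finitely presented iff it is isomorphic to the quotient of the
`M`-act `M` by a finitely generated right congruence on `M`. -/
theorem cyclic_fp_iff {M : Type*} [Monoid M] {A : Type*} (α : RActOn M A)
    (hcyc : ∃ a : A, ∀ b : A, ∃ m : M, α.act a m = b) :
    FinitelyPresented α ↔
      ∃ f : M → A, Function.Surjective f ∧ IsHom (selfAct M) α f ∧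
        ∃ X : Set (M × M), X.Finite ∧
          ∀ u v : M, f u = f v ↔ congClosure (selfAct M) (fun a b => (a, b) ∈ X) u v := by
  constructor
  · rintro ⟨X, hXfin, R, hRfin, f, hfsurj, hfhom, hfker⟩
    obtain ⟨a, ha⟩ := hcyc
    refine ⟨fun m => α.act a m, fun b => ha b, ?_, ?_⟩
    · intro u m
      show α.act a (u * m) = α.act (α.act a u) m
      exact α.act_mul a u m
    · -- choose preimage data
      have hmx : ∀ x : X, ∃ m : M, α.act a m = f (x, 1) := fun x => ha (f (x, 1))
      choose mx hmxspec using hmx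
      obtain ⟨⟨x0, p0⟩, hx0⟩ := hfsurj a
      set φ : X × M → M := fun p => mx p.1 * p.2 with hφdef
      have hφhom : IsHom (free M X) (selfAct M) φ := by
        intro p n
        show mx p.1 * (p.2 * n) = (mx p.1 * p.2) * n
        rw [mul_assoc]
      have hgφ : ∀ p : X × M, α.act a (φ p) = f p := by
        rintro ⟨x, m⟩
        show α.act a (mx x * m) = f (x, m)
        rw [α.act_mul, hmxspec]
        have := hfhom (x, 1) m
        simpa [free] using this.symm
      set ψ : M → X × M := fun m => (x0, p0 * m) with hψdef
      have hfψ : ∀ m : M, f (ψ m) = α.act a m := by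
        intro m
        have := hfhom (x0, p0) m
        simp only [free] at this
        rw [hψdef]
        simpa [hx0] using this
      set Y : Set (M × M) :=
        ((fun p : (X × M) × (X × M) => (φ p.1, φ p.2)) '' R) ∪ {(mx x0 * p0, 1)} with hYdef
      refine ⟨Y, (hRfin.image _).union (Set.finite_singleton _), ?_⟩
      intro u v
      constructor
      · intro huv
        intro ρ hρ hY
        -- f (ψ u) = f (ψ v)
        have h1 : f (ψ u) = f (ψ v) := by rw [hfψ, hfψ]; exact huv
        have h2 := (hfker _ _).1 h1
        have h3 : ρ (φ (ψ u)) (φ (ψ v)) := by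
          refine closure_map (free M X) (selfAct M) φ hφhom _ ρ hρ ?_ _ _ h2
          intro x y hxy
          exact hY _ _ (Or.inl ⟨(x, y), hxy, rfl⟩)
        have hbase : ρ (mx x0 * p0) 1 := hY _ _ (Or.inr rfl)
        have hu : ρ ((mx x0 * p0) * u) (1 * u) := hρ.2 _ _ u hbase
        have hv : ρ ((mx x0 * p0) * v) (1 * v) := hρ.2 _ _ v hbase
        have hφψu : φ (ψ u) = (mx x0 * p0) * u := by
          show mx x0 * (p0 * u) = (mx x0 * p0) * u
          rw [mul_assoc]
        have hφψv : φ (ψ v) = (mx x0 * p0) * v := by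
          show mx x0 * (p0 * v) = (mx x0 * p0) * v
          rw [mul_assoc]
        rw [hφψu, hφψv] at h3
        have := hρ.1.trans (hρ.1.symm hu) (hρ.1.trans h3 hv)
        simpa [one_mul] using this
      · intro h
        have hg : IsHom (selfAct M) α (fun m => α.act a m) := by
          intro u m
          show α.act a (u * m) = α.act (α.act a u) m
          exact α.act_mul a u m
        refine h (fun u v => α.act a u = α.act a v)
          (ker_isCong (selfAct M) α _ hg) ?_
        rintro x y (⟨⟨p, q⟩, hpq, heq⟩ | hxy)
        · obtain ⟨h1, h2⟩ := Prod.mk.injEq .. ▸ heq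
          rw [← h1, ← h2, hgφ, hgφ]
          exact (hfker p q).2 (closure_self _ _ hpq)
        · simp only [Set.mem_singleton_iff, Prod.mk.injEq] at hxy
          rw [hxy.1, hxy.2]
          have : mx x0 * p0 = φ (x0, p0) := rfl
          rw [this, hgφ, hx0, α.act_one]
  · rintro ⟨f, hfsurj, hfhom, Xs, hXfin, hfker⟩
    refine ⟨PUnit, inferInstance, (fun q : M × M => (((), q.1), ((), q.2))) '' Xs,
      hXfin.image _, fun p => f p.2, ?_, ?_, ?_⟩
    · intro b
      obtain ⟨m, hm⟩ := hfsurj b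
      exact ⟨((), m), hm⟩
    · intro p n
      show f (p.2 * n) = α.act (f p.2) n
      exact hfhom p.2 n
    · rintro ⟨⟨⟩, u⟩ ⟨⟨⟩, v⟩
      show f u = f v ↔ _
      rw [hfker u v]
      constructor
      · intro h ρ hρ hR
        have : ρ (((), u)) (((), v)) := by
          refine closure_map (selfAct M) (free M PUnit) (fun m => ((), m)) ?_ _ ρ hρ ?_ _ _ h
          · intro m n; rfl
          · intro x y hxy
            exact hR _ _ ⟨(x, y), hxy, rfl⟩
        exact this
      · intro h ρ hρ hX
        refine closure_map (free M PUnit) (selfAct M) (fun p => p.2) ?_ _ ρ hρ ?_ _ _ h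
        · intro p n; rfl
        · rintro x y ⟨⟨c, d⟩, hcd, heq⟩
          obtain ⟨h1, h2⟩ := Prod.mk.injEq .. ▸ heq
          have hx : x.2 = c := by rw [← h1]
          have hy : y.2 = d := by rw [← h2]
          show ρ x.2 y.2
          rw [hx, hy]
          exact hX c d hcd
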